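/- Let Ψ = (E, Δ) be an ordered complex satisfying the quasi-circuit axiom and let v be a vertex of Ψ. Then the contraction Ψ/v (the link of v, with ground set E \ {v}) also satisfies the quasi-circuit axiom, where the circuits of Ψ/v correspond to circuits of Ψ containing v with v removed or circuits of Ψ not involving v appropriately minimal. -/

import Mathlib

variable {α : Type*} [LinearOrder α] [DecidableEq α] [Fintype α]

/-- A (abstract) simplicial complex: a downward closed family of finite sets. -/
def IsComplex (Δ : Finset α → Prop) : Prop :=
  ∀ ⦃s t : Finset α⦄, Δ t → s ⊆ t → Δ s

/-- A simplicial complex with all faces contained in the ground set `E`. -/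
def IsComplexOn (E : Finset α) (Δ : Finset α → Prop) : Prop :=
  (∀ ⦃s⦄, Δ s → s ⊆ E) ∧ IsComplex Δ

/-- A facet (basis): a maximal face. -/
def IsFacet (Δ : Finset α → Prop) (B : Finset α) : Prop :=
  Δ B ∧ ∀ ⦃C⦄, Δ C → B ⊆ C → B = C

/-- A circuit with respect to the ground set `E`: a minimal non-face contained in `E`. -/
def IsCircuitOn (E : Finset α) (Δ : Finset α → Prop) (C : Finset α) : Prop :=
  C ⊆ E ∧ ¬ Δ C ∧ ∀ ⦃D⦄, D ⊂ C → Δ D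

/-- A circuit: a minimal non-face. -/
def IsCircuit (Δ : Finset α → Prop) (C : Finset α) : Prop :=
  ¬ Δ C ∧ ∀ ⦃D⦄, D ⊂ C → Δ D

/-- Purity: all facets have the same cardinality. -/
def IsPure (Δ : Finset α → Prop) : Prop :=
  ∀ ⦃B B'⦄, IsFacet Δ B → IsFacet Δ B' → B.card = B'.card

/-- Lexicographic order on finite sets, comparing sorted element lists:
`B <lex B'` iff the minimum of the symmetric difference lies in `B`. -/
def lexLt (B B' : Finset α) : Prop :=
  ∃ a ∈ B \ B', ∀ b ∈ symmDiff B B', a ≤ b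

def lexLe (B B' : Finset α) : Prop := B = B' ∨ lexLt B B'

/-- `B₀` is the lexicographically smallest facet of `Δ`. -/
def IsLexMinFacet (Δ : Finset α → Prop) (B₀ : Finset α) : Prop :=
  IsFacet Δ B₀ ∧ ∀ ⦃B⦄, IsFacet Δ B → lexLe B₀ B

/-- Gale (componentwise) order: the `i`-th smallest element of `B` is at most
the `i`-th smallest element of `B'`, for all `i` (in particular equal cardinalities). -/
def galeLe (B B' : Finset α) : Prop :=
  List.Forall₂ (· ≤ ·) (Finset.sort B (· ≤ ·)) (Finset.sort B' (· ≤ ·))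

/-- Quasi-exchange axiom (without the purity requirement). -/
def QE (Δ : Finset α → Prop) : Prop :=
  ∀ ⦃B₁ B₂⦄, IsFacet Δ B₁ → IsFacet Δ B₂ →
    ∀ b₁ ∈ B₁ \ B₂, (∀ b ∈ B₂ \ B₁, b < b₁) →
      ∃ b₂ ∈ B₂ \ B₁, IsFacet Δ (insert b₂ (B₁.erase b₁))

/-- Quasi-circuit axiom (with circuits taken relative to the ground set `E`). -/
def QCon (E : Finset α) (Δ : Finset α → Prop) : Prop :=
  ∀ ⦃C₁ C₂⦄, IsCircuitOn E Δ C₁ → IsCircuitOn E Δ C₂ → C₁ ≠ C₂ →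
    ∀ c ∈ C₁ ∩ C₂, (∃ m ∈ symmDiff C₁ C₂, c < m) →
      ∃ C₃, IsCircuitOn E Δ C₃ ∧ C₃ ⊆ (C₁ ∪ C₂).erase c

/-- Quasi-circuit axiom (circuits are arbitrary minimal non-faces). -/
def QC (Δ : Finset α → Prop) : Prop :=
  ∀ ⦃C₁ C₂⦄, IsCircuit Δ C₁ → IsCircuit Δ C₂ → C₁ ≠ C₂ →
    ∀ c ∈ C₁ ∩ C₂, (∃ m ∈ symmDiff C₁ C₂, c < m) →
      ∃ C₃, IsCircuit Δ C₃ ∧ C₃ ⊆ (C₁ ∪ C₂).erase c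

/-- `b` is an internally passive element of the facet `B`. -/
def InternallyPassive (Δ : Finset α → Prop) (B : Finset α) (b : α) : Prop :=
  b ∈ B ∧ ∃ b', b' < b ∧ b' ∉ B ∧ IsFacet Δ (insert b' (B.erase b))

/-- Contraction of a face `I`. -/
def contract (Δ : Finset α → Prop) (I : Finset α) : Finset α → Prop :=
  fun J => Disjoint J I ∧ Δ (J ∪ I)

/-- Quasi-independence axiom: `Δ` is pure and for faces `I₁, I₂` with `|I₁| > |I₂|`,
if `I₁ \ I ⊆ B_{I,0}` for some `I ⊆ I₁ ∩ I₂`, then some `e ∈ I₁ \ I₂` extends `I₂`. -/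
def QI (Δ : Finset α → Prop) : Prop :=
  IsPure Δ ∧ ∀ ⦃I₁ I₂ : Finset α⦄, Δ I₁ → Δ I₂ → I₂.card < I₁.card →
    (∃ I, I ⊆ I₁ ∩ I₂ ∧ ∃ B, IsLexMinFacet (contract Δ I) B ∧ I₁ \ I ⊆ B) →
    ∃ e ∈ I₁ \ I₂, Δ (insert e I₂)

/-- The First Basis Property. -/
inductive FBP : (Finset α → Prop) → Prop
  | rank1 (Δ : Finset α → Prop) (h : ∀ s, Δ s → s.card ≤ 1) : FBP Δ
  | unique (Δ : Finset α → Prop) (B : Finset α) (hB : IsFacet Δ B)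
      (hu : ∀ B', IsFacet Δ B' → B' = B) : FBP Δ
  | step (Δ : Finset α → Prop) (B₀ : Finset α) (h₀ : IsLexMinFacet Δ B₀)
      (h1 : ∀ v, Δ {v} → v ∉ B₀ → FBP (contract Δ {v}))
      (h2 : ∀ v, Δ {v} → v ∉ B₀ →
        ∃ Bv, IsLexMinFacet (contract Δ {v}) Bv ∧ Bv ⊆ B₀) :
      FBP Δ

/-- Any non-face contained in the ground set contains a circuit. -/
lemma exists_circuit_subset {E : Finset α} {Δ : Finset α → Prop} :
    ∀ S : Finset α, S ⊆ E → ¬ Δ S → ∃ C, IsCircuitOn E Δ C ∧ C ⊆ S := by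
  intro S
  induction S using Finset.strongInduction with
  | _ S ih =>
    intro hSE hS
    by_cases h : ∀ D, D ⊂ S → Δ D
    · exact ⟨S, ⟨hSE, hS, fun D hD => h D hD⟩, subset_rfl⟩
    · push_neg at h
      obtain ⟨D, hDS, hD⟩ := h
      obtain ⟨C, hC, hCD⟩ := ih D hDS (hDS.subset.trans hSE) hD
      exact ⟨C, hC, hCD.trans hDS.subset⟩

/-- the contraction of a vertex of a complex satisfying the
quasi-circuit axiom satisfies the quasi-circuit axiom. -/
theorem stmt15 (E : Finset α) (Δ : Finset α → Prop) (hΔ : IsComplexOn E Δ)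
    (hQC : QCon E Δ) (v : α) (hvE : v ∈ E) (hv : Δ {v}) :
    QCon (E.erase v) (fun J => v ∉ J ∧ Δ (insert v J)) := by
  obtain ⟨hE, hdown⟩ := hΔ
  set Δ' : Finset α → Prop := fun J => v ∉ J ∧ Δ (insert v J) with hΔ'def
  -- lifting circuits of Δ' to circuits of Δ
  have lift : ∀ C, IsCircuitOn (E.erase v) Δ' C →
      ∃ D, IsCircuitOn E Δ D ∧ D.erase v = C ∧ C ⊆ D := by
    intro C ⟨hCE, hCnf, hCmin⟩
    have hvC : v ∉ C := fun h => (Finset.mem_erase.mp (hCE h)).1 rfl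
    have hins : ¬ Δ (insert v C) := fun h => hCnf ⟨hvC, h⟩
    have hsub : insert v C ⊆ E :=
      Finset.insert_subset hvE (hCE.trans (Finset.erase_subset _ _))
    obtain ⟨D, hD, hDsub⟩ := exists_circuit_subset (insert v C) hsub hins
    by_cases hvD : v ∈ D
    · -- D.erase v is a non-face of Δ' contained in C, hence = C
      have h1 : D.erase v ⊆ C := by
        intro x hx
        rcases Finset.mem_erase.mp hx with ⟨hxv, hxD⟩
        rcases Finset.mem_insert.mp (hDsub hxD) with h | h
        · exact absurd h hxv
        · exact h
      have h2 : ¬ Δ' (D.erase v) := by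
        rintro ⟨-, h⟩
        rw [Finset.insert_erase hvD] at h
        exact hD.2.1 h
      have heq : D.erase v = C := by
        by_contra hne
        exact h2 (hCmin (Finset.ssubset_iff_subset_ne.mpr ⟨h1, hne⟩))
      refine ⟨D, hD, heq, ?_⟩
      rw [← heq]; exact Finset.erase_subset _ _
    · -- D ⊆ C and D is a non-face of Δ', hence = C
      have h1 : D ⊆ C := by
        intro x hx
        rcases Finset.mem_insert.mp (hDsub hx) with h | h
        · exact absurd (h ▸ hx) hvD
        · exact h
      have h2 : ¬ Δ' D := by
        rintro ⟨-, h⟩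
        exact hD.2.1 (hdown h (Finset.subset_insert _ _))
      have heq : D = C := by
        by_contra hne
        exact h2 (hCmin (Finset.ssubset_iff_subset_ne.mpr ⟨h1, hne⟩))
      exact ⟨D, hD, by rw [heq, Finset.erase_eq_of_notMem (heq ▸ hvD)], heq ▸ subset_rfl⟩
  intro C₁ C₂ h₁ h₂ hne c hc hm
  obtain ⟨D₁, hD₁, hD₁e, hC₁D₁⟩ := lift C₁ h₁
  obtain ⟨D₂, hD₂, hD₂e, hC₂D₂⟩ := lift C₂ h₂
  have hvC₁ : v ∉ C₁ := fun h => (Finset.mem_erase.mp (h₁.1 h)).1 rfl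
  have hvC₂ : v ∉ C₂ := fun h => (Finset.mem_erase.mp (h₂.1 h)).1 rfl
  have hDne : D₁ ≠ D₂ := fun h => hne (by rw [← hD₁e, ← hD₂e, h])
  have hcC₁ : c ∈ C₁ := (Finset.mem_inter.mp hc).1
  have hcC₂ : c ∈ C₂ := (Finset.mem_inter.mp hc).2
  have hcv : c ≠ v := fun h => hvC₁ (h ▸ hcC₁)
  have hcD : c ∈ D₁ ∩ D₂ := Finset.mem_inter.mpr ⟨hC₁D₁ hcC₁, hC₂D₂ hcC₂⟩
  obtain ⟨m, hmsd, hcm⟩ := hm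
  have hmD : m ∈ symmDiff D₁ D₂ := by
    rw [Finset.mem_symmDiff] at hmsd ⊢
    have hmv : m ≠ v := by
      rintro rfl
      rcases hmsd with ⟨h, -⟩ | ⟨h, -⟩
      exacts [hvC₁ h, hvC₂ h]
    rcases hmsd with ⟨h1, h2⟩ | ⟨h1, h2⟩
    · exact Or.inl ⟨hC₁D₁ h1, fun h => h2 (hD₂e ▸ Finset.mem_erase.mpr ⟨hmv, h⟩)⟩
    · exact Or.inr ⟨hC₂D₂ h1, fun h => h2 (hD₁e ▸ Finset.mem_erase.mpr ⟨hmv, h⟩)⟩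
  obtain ⟨C₃, hC₃, hC₃sub⟩ := hQC hD₁ hD₂ hDne c hcD ⟨m, hmD, hcm⟩
  -- C₃.erase v is a non-face of Δ' inside (C₁ ∪ C₂).erase c
  have hS_sub : C₃.erase v ⊆ (C₁ ∪ C₂).erase c := by
    intro x hx
    rcases Finset.mem_erase.mp hx with ⟨hxv, hxC₃⟩
    rcases Finset.mem_erase.mp (hC₃sub hxC₃) with ⟨hxc, hxU⟩
    refine Finset.mem_erase.mpr ⟨hxc, ?_⟩
    rcases Finset.mem_union.mp hxU with h | h
    · exact Finset.mem_union_left _ (hD₁e ▸ Finset.mem_erase.mpr ⟨hxv, h⟩)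
    · exact Finset.mem_union_right _ (hD₂e ▸ Finset.mem_erase.mpr ⟨hxv, h⟩)
  have hS_E : C₃.erase v ⊆ E.erase v := Finset.erase_subset_erase _ hC₃.1
  have hS_nf : ¬ Δ' (C₃.erase v) := by
    rintro ⟨-, h⟩
    exact hC₃.2.1 (hdown h (fun x hx => by
      by_cases hxv : x = v
      · exact hxv ▸ Finset.mem_insert_self _ _
      · exact Finset.mem_insert_of_mem (Finset.mem_erase.mpr ⟨hxv, hx⟩)))
  obtain ⟨C₄, hC₄, hC₄sub⟩ := exists_circuit_subset (C₃.erase v) hS_E hS_nf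
  exact ⟨C₄, hC₄, hC₄sub.trans hS_sub⟩
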